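/- Let A be a modal algebra such that □x ≤ □□x holds for every x ∈ A. If the non-compactness rule is true at A, then □(□x ⇨ x) ≤ □x holds for every x ∈ A (equivalently, □(□x ⇨ x) ⇨ □x = ⊤ for every x), where a ⇨ b denotes the Boolean implication ¬a ⊔ b. -/
import Mathlib


/-- Modal formulas over a countable set of propositional variables. -/
inductive Fml : Type where
  | prop : ℕ → Fml
  | top : Fml
  | and : Fml → Fml → Fml
  | neg : Fml → Fml
  | box : Fml → Fml

namespace Fml
/-- `⊥` abbreviates `¬⊤`. -/
def bot : Fml := neg top
/-- `φ ∨ ψ` abbreviates `¬(¬φ ∧ ¬ψ)`. -/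
def or (φ ψ : Fml) : Fml := neg (and (neg φ) (neg ψ))
/-- `φ ⊃ ψ` abbreviates `¬(φ ∧ ¬ψ)`. -/
def imp (φ ψ : Fml) : Fml := neg (and φ (neg ψ))
/-- `◇φ` abbreviates `¬□¬φ`. -/
def dia (φ : Fml) : Fml := neg (box (neg φ))
/-- `◇ⁿφ`: n-fold application of `◇`. -/
def dian : ℕ → Fml → Fml
  | 0, φ => φ
  | n+1, φ => dia (dian n φ)
end Fml

/-- Valuation of modal formulas in a modal algebra. -/
def aval {A : Type} [BooleanAlgebra A] (box : A → A) (v : ℕ → A) : Fml → A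
  | .prop n => v n
  | .top => ⊤
  | .and φ ψ => aval box v φ ⊓ aval box v ψ
  | .neg φ => (aval box v φ)ᶜ
  | .box φ => box (aval box v φ)

/-- A formula is true at a modal algebra if it evaluates to `⊤` under every valuation. -/
def ATrue {A : Type} [BooleanAlgebra A] (box : A → A) (φ : Fml) : Prop :=
  ∀ v : ℕ → A, aval box v φ = ⊤

/-- The non-compactness rule is true at a modal algebra: for every formula `φ`,
if `φ ⊃ ◇ⁿ⊤` is true at the algebra for every `n`, then `φ ⊃ ⊥` is true at it. -/
def NCRule {A : Type} [BooleanAlgebra A] (box : A → A) : Prop :=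
  ∀ φ : Fml, (∀ n : ℕ, ATrue box (Fml.imp φ (Fml.dian n Fml.top))) →
    ATrue box (Fml.imp φ Fml.bot)

section Aux
variable {A : Type} [BooleanAlgebra A] (box : A → A)

private lemma box_mono (hbox_inf : ∀ x y : A, box (x ⊓ y) = box x ⊓ box y)
    {a b : A} (h : a ≤ b) : box a ≤ box b := by
  have : box a = box a ⊓ box b := by rw [← hbox_inf, inf_eq_left.mpr h]
  rw [this]; exact inf_le_right

/-- value of ◇ⁿ⊤ (independent of the valuation) -/
private def dval (n : ℕ) : A :=
  match n with
  | 0 => ⊤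
  | n+1 => (box (dval n)ᶜ)ᶜ

private lemma aval_dian (v : ℕ → A) (n : ℕ) :
    aval box v (Fml.dian n Fml.top) = dval box n := by
  induction n with
  | zero => rfl
  | succ n ih => simp [Fml.dian, Fml.dia, aval, ih, dval]

/-- the key algebraic step: c ≤ ◇c for c = □(□z⇨z) ⊓ (□z)ᶜ,
    stated as c ⊓ □(cᶜ) = ⊥. -/
private lemma key (hbox_inf : ∀ x y : A, box (x ⊓ y) = box x ⊓ box y)
    (htrans : ∀ x : A, box x ≤ box (box x)) (z : A) :
    (box (box z ⇨ z) ⊓ (box z)ᶜ) ⊓ box ((box (box z ⇨ z) ⊓ (box z)ᶜ))ᶜ = ⊥ := by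
  set b := box (box z ⇨ z) with hb
  have hcc : (b ⊓ (box z)ᶜ)ᶜ = bᶜ ⊔ box z := by
    rw [compl_inf, compl_compl]
  have h1 : b ⊓ box ((b ⊓ (box z)ᶜ))ᶜ ≤ box z := by
    calc b ⊓ box ((b ⊓ (box z)ᶜ))ᶜ
        ≤ (box b ⊓ box ((b ⊓ (box z)ᶜ))ᶜ) ⊓ b := by
          refine le_inf (inf_le_inf_right _ ?_) inf_le_left
          exact htrans _
      _ = box (b ⊓ (bᶜ ⊔ box z)) ⊓ b := by rw [← hbox_inf, hcc]
      _ = box (b ⊓ box z) ⊓ b := by rw [inf_sup_left, inf_compl_eq_bot, bot_sup_eq]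
      _ ≤ box (box z) ⊓ b := inf_le_inf_right _ (box_mono box hbox_inf inf_le_right)
      _ = box (box z ⊓ (box z ⇨ z)) := by rw [hbox_inf, inf_comm]
      _ = box (box z ⊓ z) := by rw [inf_himp]
      _ ≤ box z := box_mono box hbox_inf inf_le_right
  have : (b ⊓ (box z)ᶜ) ⊓ box ((b ⊓ (box z)ᶜ))ᶜ ≤ box z ⊓ (box z)ᶜ := by
    refine le_inf ?_ (le_trans inf_le_left inf_le_right)
    calc (b ⊓ (box z)ᶜ) ⊓ box ((b ⊓ (box z)ᶜ))ᶜ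
        ≤ b ⊓ box ((b ⊓ (box z)ᶜ))ᶜ := inf_le_inf_right _ inf_le_left
      _ ≤ box z := h1
  simpa [inf_compl_eq_bot] using le_bot_iff.mp (this.trans_eq inf_compl_eq_bot)

private lemma le_dval (hbox_inf : ∀ x y : A, box (x ⊓ y) = box x ⊓ box y)
    (htrans : ∀ x : A, box x ≤ box (box x)) (z : A) (n : ℕ) :
    box (box z ⇨ z) ⊓ (box z)ᶜ ≤ dval box n := by
  induction n with
  | zero => exact le_top
  | succ n ih =>
    have h1 : box (box z ⇨ z) ⊓ (box z)ᶜ ≤ (box ((box (box z ⇨ z) ⊓ (box z)ᶜ))ᶜ)ᶜ := by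
      rw [le_compl_iff_disjoint_right, disjoint_iff]
      exact key box hbox_inf htrans z
    refine h1.trans ?_
    show _ ≤ (box (dval box n)ᶜ)ᶜ
    exact compl_le_compl (box_mono box hbox_inf (compl_le_compl ih))

end Aux

theorem stmt8 {A : Type} [BooleanAlgebra A] (box : A → A)
    (hbox_top : box ⊤ = ⊤) (hbox_inf : ∀ x y : A, box (x ⊓ y) = box x ⊓ box y)
    (htrans : ∀ x : A, box x ≤ box (box x)) (hnc : NCRule box) :
    ∀ x : A, box (box x ⇨ x) ≤ box x := by
  intro x
  set φ : Fml := Fml.and (Fml.box (Fml.imp (Fml.box (.prop 0)) (.prop 0)))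
      (Fml.neg (Fml.box (.prop 0))) with hφ
  have hφval : ∀ v : ℕ → A, aval box v φ = box (box (v 0) ⇨ (v 0)) ⊓ (box (v 0))ᶜ := by
    intro v
    simp [hφ, Fml.imp, aval, himp_eq, compl_inf, compl_compl, sup_comm]
  have hprem : ∀ n : ℕ, ATrue box (Fml.imp φ (Fml.dian n Fml.top)) := by
    intro n v
    show (aval box v φ ⊓ (aval box v (Fml.dian n Fml.top))ᶜ)ᶜ = ⊤
    rw [hφval, aval_dian]
    rw [compl_eq_top, ← disjoint_iff, ← le_compl_iff_disjoint_right, compl_compl]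
    exact le_dval box hbox_inf htrans (v 0) n
  have hconc := hnc φ hprem (fun _ => x)
  have : (aval box (fun _ => x) φ ⊓ (⊤ : A)ᶜᶜ)ᶜ = ⊤ := hconc
  rw [compl_compl, inf_top_eq, compl_eq_top, hφval] at this
  rwa [← sdiff_eq_bot_iff, sdiff_eq]
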